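/- Degenerate case of Corollary 1: for ε1, ε2 ∈ [0,1], if (1 − H(ε1))/2 ≥ 1 − H(ε2), then max over P ∈ [0,1] of min{ (1 − H(ε1))·(1 − P), H(ε2·(1 − 2P) + P) − H(ε2) } = 1 − H(ε2), i.e., the capacity of the two-hop half-duplex relay channel with binary-symmetric links equals the capacity of the relay-destination binary-symmetric channel. -/
import Mathlib

/-- The binary entropy function (in bits), with the convention `0·log2 0 = 0`. -/
noncomputable def binH (p : ℝ) : ℝ :=
  -(p * Real.logb 2 p) - (1 - p) * Real.logb 2 (1 - p)

lemma binH_eq (p : ℝ) : binH p = Real.binEntropy p / Real.log 2 := by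
  unfold binH Real.binEntropy Real.logb
  rw [Real.log_inv, Real.log_inv]
  ring

lemma binH_le_one (p : ℝ) : binH p ≤ 1 := by
  rw [binH_eq, div_le_one (Real.log_pos (by norm_num))]
  exact Real.binEntropy_le_log_two

lemma binH_half : binH (1/2 : ℝ) = 1 := by
  rw [binH_eq, show (1/2:ℝ) = 2⁻¹ by norm_num, Real.binEntropy_two_inv,
    div_self (Real.log_ne_zero_of_pos_of_ne_one two_pos (by norm_num))]

/-- degenerate case of Corollary 1: for `ε1, ε2 ∈ [0,1]`, if
`(1 − H(ε1))/2 ≥ 1 − H(ε2)`, then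
`max_{P ∈ [0,1]} min{ (1 − H(ε1))·(1 − P), H(ε2·(1 − 2P) + P) − H(ε2) } = 1 − H(ε2)`,
i.e., the capacity of the two-hop half-duplex relay channel with binary-symmetric links
equals the capacity of the relay-destination binary-symmetric channel. -/
theorem capacity_BSC_degenerate_case (ε1 ε2 : ℝ)
    (hε1 : ε1 ∈ Set.Icc (0:ℝ) 1) (hε2 : ε2 ∈ Set.Icc (0:ℝ) 1)
    (hdeg : 1 - binH ε2 ≤ (1 - binH ε1) / 2) :
    IsGreatest {r : ℝ | ∃ P ∈ Set.Icc (0:ℝ) 1,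
        r = min ((1 - binH ε1) * (1 - P)) (binH (ε2 * (1 - 2 * P) + P) - binH ε2)}
      (1 - binH ε2) := by
  constructor
  · refine ⟨1/2, by norm_num, ?_⟩
    have h : ε2 * (1 - 2 * (1/2)) + 1/2 = 1/2 := by ring
    rw [h, binH_half, min_eq_right]
    linarith
  · rintro r ⟨P, hP, rfl⟩
    calc min ((1 - binH ε1) * (1 - P)) (binH (ε2 * (1 - 2 * P) + P) - binH ε2)
        ≤ binH (ε2 * (1 - 2 * P) + P) - binH ε2 := min_le_right _ _
      _ ≤ 1 - binH ε2 := by linarith [binH_le_one (ε2 * (1 - 2 * P) + P)]
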